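/- arXiv:math/0601530 — 7 statements merged into one kernel-verified Lean document; each statement's English description precedes it below -/
import Mathlib

section
/- Let f : ℝⁿ → ℝ ∪ {+∞}, let x ∈ dom f and let x* be a Fréchet subgradient of f at x. Let c : ℝ → ℝⁿ be differentiable at 0 with c(0) = x and c(t) ∈ dom f for all t in a neighborhood of 0, and suppose the (real-valued near 0) function t ↦ f(c(t)) is differentiable at 0. Then d/dt f(c(t))|_{t=0} = ⟨x*, c'(0)⟩. -/
open Filter Topology

/-- The Fréchet subdifferential of an extended-real-valued function
`f : ℝⁿ → ℝ ∪ {+∞}` (modelled as `EReal`-valued, with no `⊥` values) at `x`: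
the set of `x*` with `liminf_{y → x, y ≠ x} (f y - f x - ⟨x*, y-x⟩)/‖y-x‖ ≥ 0`.
It is empty off the domain `{x | f x ≠ ⊤}`. -/
noncomputable def FrechetSubdiff {n : ℕ} (f : EuclideanSpace ℝ (Fin n) → EReal)
    (x : EuclideanSpace ℝ (Fin n)) : Set (EuclideanSpace ℝ (Fin n)) :=
  {xs | f x ≠ ⊤ ∧ f x ≠ ⊥ ∧
    0 ≤ Filter.liminf
      (fun y => (f y - f x - ((inner ℝ xs (y - x) : ℝ) : EReal)) * ((‖y - x‖⁻¹ : ℝ) : EReal))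
      (𝓝[≠] x)}

/-- if `x*` is a Fréchet subgradient of `f` at `x ∈ dom f`, `c` is a curve
differentiable at `0` with `c 0 = x`, staying in `dom f` near `0`, and `t ↦ f (c t)`
is real-valued near `0` (with values `g t`) and differentiable at `0`, then
`d/dt f(c(t))|₀ = ⟨x*, c'(0)⟩`. -/
theorem statement0 {n : ℕ} (f : EuclideanSpace ℝ (Fin n) → EReal)
    (hbot : ∀ y, f y ≠ ⊥)
    (x xs : EuclideanSpace ℝ (Fin n)) (hx : f x ≠ ⊤)
    (hxs : xs ∈ FrechetSubdiff f x)
    (c : ℝ → EuclideanSpace ℝ (Fin n))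
    (hc : DifferentiableAt ℝ c 0) (hc0 : c 0 = x)
    (hdom : ∀ᶠ t in 𝓝 (0:ℝ), f (c t) ≠ ⊤)
    (g : ℝ → ℝ) (hfg : ∀ᶠ t in 𝓝 (0:ℝ), f (c t) = (g t : EReal))
    (hg : DifferentiableAt ℝ g 0) :
    deriv g 0 = (inner ℝ xs (deriv c 0) : ℝ) := by
  obtain ⟨-, -, hlim⟩ := hxs
  have hgx : f x = ((g 0 : ℝ) : EReal) := by rw [← hc0]; exact hfg.self_of_nhds
  set c' : EuclideanSpace ℝ (Fin n) := deriv c 0 with hc'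
  set K : ℝ := ‖c'‖ + 1 with hK
  have hKpos : 0 < K := by positivity
  -- bound ‖c t - x‖ ≤ K * |t| eventually
  have hcd : HasDerivAt c c' 0 := hc.hasDerivAt
  have hbound : ∀ᶠ t in 𝓝 (0:ℝ), ‖c t - x‖ ≤ K * |t| := by
    have h1 := (hasDerivAt_iff_isLittleO.mp hcd).bound one_pos
    filter_upwards [h1] with t ht
    have h0 : c t - x = (c t - c 0 - (t - 0) • c') + (t - 0) • c' := by rw [hc0]; abel
    calc ‖c t - x‖ = ‖(c t - c 0 - (t - 0) • c') + (t - 0) • c'‖ := by rw [h0]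
      _ ≤ ‖c t - c 0 - (t - 0) • c'‖ + ‖(t - 0) • c'‖ := norm_add_le _ _
      _ ≤ 1 * ‖t - 0‖ + ‖t - 0‖ * ‖c'‖ := add_le_add ht (le_of_eq (norm_smul _ _))
      _ = K * |t| := by simp [hK, Real.norm_eq_abs]; ring
  -- key inequality
  have hkey : ∀ ε : ℝ, 0 < ε → ∀ᶠ t in 𝓝 (0:ℝ),
      -(ε * (K * |t|)) ≤ g t - g 0 - inner ℝ xs (c t - x) := by
    intro ε hε
    have hlt : ∀ᶠ y in 𝓝[≠] x,
        ((-ε : ℝ) : EReal) < (f y - f x - ((inner ℝ xs (y - x) : ℝ) : EReal)) * ((‖y - x‖⁻¹ : ℝ) : EReal) := by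
      apply eventually_lt_of_lt_liminf
      · calc ((-ε : ℝ) : EReal) < (0 : EReal) := by exact_mod_cast neg_neg_iff_pos.mpr hε
          _ ≤ _ := hlim
      · exact isBoundedUnder_of ⟨⊥, fun y => bot_le⟩
    obtain ⟨u, hu, hP⟩ := eventually_nhdsWithin_iff.mp hlt |>.exists_mem
    have hcu : ∀ᶠ t in 𝓝 (0:ℝ), c t ∈ u :=
      hc.continuousAt (by rw [hc0]; exact hu)
    filter_upwards [hcu, hfg, hbound] with t hcu ht hbt
    by_cases hne : c t = x
    · have : g t = g 0 := by
        have := ht; rw [hne, hgx] at this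
        exact_mod_cast this.symm
      rw [hne, this]
      simp
      positivity
    · have hP' := hP _ hcu hne
      rw [ht, hgx] at hP'
      have hnorm : (0:ℝ) < ‖c t - x‖ := by
        simpa [sub_eq_zero] using hne
      have : (-ε : ℝ) < (g t - g 0 - inner ℝ xs (c t - x)) * ‖c t - x‖⁻¹ := by
        have heq : ((g t : ℝ) : EReal) - ((g 0 : ℝ) : EReal) - ((inner ℝ xs (c t - x) : ℝ) : EReal)
            = (((g t - g 0 - inner ℝ xs (c t - x) : ℝ)) : EReal) := by
          push_cast; ring
        rw [heq, ← EReal.coe_mul] at hP'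
        exact_mod_cast hP'
      have h2 : -ε * ‖c t - x‖ < g t - g 0 - inner ℝ xs (c t - x) := by
        have h' : -ε < (g t - g 0 - inner ℝ xs (c t - x)) / ‖c t - x‖ := by
          rwa [div_eq_mul_inv]
        exact (lt_div_iff₀ hnorm).mp h'
      calc -(ε * (K * |t|)) ≤ -ε * ‖c t - x‖ := by nlinarith
        _ ≤ _ := h2.le
  -- φ and its derivative
  set L : ℝ := deriv g 0 - inner ℝ xs c' with hL
  have hip : HasDerivAt (fun t => (inner ℝ xs (c t - x) : ℝ)) (inner ℝ xs c') 0 := by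
    have h1 : HasDerivAt (fun t => c t - x) c' 0 := hcd.sub_const x
    exact (innerSL ℝ xs).hasFDerivAt.comp_hasDerivAt 0 h1
  have hφ : HasDerivAt (fun t => g t - g 0 - inner ℝ xs (c t - x)) L 0 :=
    (hg.hasDerivAt.sub_const (g 0)).sub hip
  have hφ0 : (fun t => g t - g 0 - inner ℝ xs (c t - x)) 0 = 0 := by
    simp [hc0]
  have hslope := hasDerivAt_iff_tendsto_slope.mp hφ
  -- L ≥ -εK from right, L ≤ εK from left
  have hεK : ∀ ε : ℝ, 0 < ε → -(ε * K) ≤ L ∧ L ≤ ε * K := by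
    intro ε hε
    constructor
    · have htend : Tendsto (slope (fun t => g t - g 0 - inner ℝ xs (c t - x)) 0) (𝓝[>] (0:ℝ)) (𝓝 L) :=
        hslope.mono_left (nhdsWithin_mono _ fun t ht => ne_of_gt ht)
      refine ge_of_tendsto htend ?_
      filter_upwards [eventually_nhdsWithin_of_eventually_nhds (hkey ε hε),
          self_mem_nhdsWithin] with t ht (htpos : 0 < t)
      rw [slope_def_field, hc0]
      simp only [sub_self, inner_zero_right, sub_zero]
      rw [le_div_iff₀ htpos]
      rw [abs_of_pos htpos] at ht
      linarith [ht]
    · have htend : Tendsto (slope (fun t => g t - g 0 - inner ℝ xs (c t - x)) 0) (𝓝[<] (0:ℝ)) (𝓝 L) :=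
        hslope.mono_left (nhdsWithin_mono _ fun t ht => ne_of_lt ht)
      refine le_of_tendsto htend ?_
      filter_upwards [eventually_nhdsWithin_of_eventually_nhds (hkey ε hε),
          self_mem_nhdsWithin] with t ht (htneg : t < 0)
      rw [slope_def_field, hc0]
      simp only [sub_self, inner_zero_right, sub_zero]
      rw [div_le_iff_of_neg htneg]
      rw [abs_of_neg htneg] at ht
      linarith [ht]
  have hL0 : L = 0 := by
    by_contra h
    have h1 : 0 < |L| := abs_pos.mpr h
    obtain ⟨h2, h3⟩ := hεK (|L| / (2 * K)) (by positivity)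
    have : |L| / (2 * K) * K = |L| / 2 := by field_simp
    rw [this] at h2 h3
    cases abs_cases L with
    | inl h4 => linarith [h4.1 ▸ h3]
    | inr h4 => linarith [h4.1, h2]
  have := hL ▸ hL0
  linarith [sub_eq_zero.mp hL0]
end

section
/- Let f : ℝⁿ → ℝ ∪ {+∞}, let M ⊆ dom f and x ∈ M, let W be a linear subspace of ℝⁿ contained in the tangent cone to M at x, and suppose there exists g ∈ W such that f(y) − f(x) − ⟨g, y − x⟩ = o(‖y − x‖) as y → x with y ∈ M. Then every Fréchet subgradient x* of f at x satisfies Proj_W(x*) = g, where Proj_W denotes the orthogonal projection of ℝⁿ onto W. -/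
open Filter Topology

/-- The tangent cone to a set `S` at a point `x ∈ S`: all `w` such that there are
positive reals `cₖ → +∞` and vectors `dₖ → 0` with `x + dₖ ∈ S` and `cₖ • dₖ → w`. -/
def TangentCone {F : Type*} [AddCommGroup F] [Module ℝ F] [TopologicalSpace F]
    (S : Set F) (x : F) : Set F :=
  {w | ∃ c : ℕ → ℝ, ∃ d : ℕ → F, (∀ k, 0 < c k) ∧ Tendsto c atTop atTop ∧
      Tendsto d atTop (𝓝 0) ∧ (∀ k, x + d k ∈ S) ∧
      Tendsto (fun k => c k • d k) atTop (𝓝 w)}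

/-- if `M ⊆ dom f`, `x ∈ M`, `W` is a linear subspace contained in the tangent
cone to `M` at `x`, and `g ∈ W` satisfies `f y - f x - ⟨g, y-x⟩ = o(‖y-x‖)` as `y → x` in `M`,
then every Fréchet subgradient `x*` of `f` at `x` has `Proj_W x* = g`. -/
theorem statement1 {n : ℕ} (f : EuclideanSpace ℝ (Fin n) → EReal)
    (hbot : ∀ y, f y ≠ ⊥)
    (M : Set (EuclideanSpace ℝ (Fin n))) (hM : ∀ y ∈ M, f y ≠ ⊤)
    (x : EuclideanSpace ℝ (Fin n)) (hx : x ∈ M)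
    (W : Submodule ℝ (EuclideanSpace ℝ (Fin n))) (hW : (W : Set _) ⊆ TangentCone M x)
    (g : EuclideanSpace ℝ (Fin n)) (hgW : g ∈ W)
    (hlo : ∀ ε > (0:ℝ), ∀ᶠ y in 𝓝[M] x,
      |(f y).toReal - (f x).toReal - (inner ℝ g (y - x) : ℝ)| ≤ ε * ‖y - x‖)
    (xs : EuclideanSpace ℝ (Fin n)) (hxs : xs ∈ FrechetSubdiff f x) :
    ((W.orthogonalProjectionOnto xs : W) : EuclideanSpace ℝ (Fin n)) = g := by
  obtain ⟨hfxtop, hfxbot, hliminf⟩ := hxs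
  set Φ : EuclideanSpace ℝ (Fin n) → EReal := fun y =>
    (f y - f x - ((inner ℝ xs (y - x) : ℝ) : EReal)) * ((‖y - x‖⁻¹ : ℝ) : EReal) with hΦdef
  -- Key claim: for every w ∈ W, ⟨g - xs, w⟩ ≥ 0.
  have key : ∀ w ∈ W, (0:ℝ) ≤ inner ℝ (g - xs) w := by
    intro w hw
    rcases eq_or_ne w 0 with rfl | hw0
    · simp
    obtain ⟨c, d, hc, hctop, hd0, hdM, hcd⟩ := hW hw
    set y : ℕ → EuclideanSpace ℝ (Fin n) := fun k => x + d k with hy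
    have hnw : (0:ℝ) < ‖w‖ := norm_pos_iff.mpr hw0
    have hdne : ∀ᶠ k in atTop, d k ≠ 0 := by
      filter_upwards [hcd.eventually_ne hw0] with k hk
      intro h; exact hk (by simp [h])
    have hytend : Tendsto y atTop (𝓝 x) := by
      have := hd0.const_add x
      simpa using this
    have hymem : ∀ k, y k ∈ M := hdM
    have hytendM : Tendsto y atTop (𝓝[M] x) :=
      tendsto_nhdsWithin_iff.mpr ⟨hytend, Eventually.of_forall hymem⟩
    have hytendne : Tendsto y atTop (𝓝[≠] x) := by
      refine tendsto_nhdsWithin_iff.mpr ⟨hytend, ?_⟩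
      filter_upwards [hdne] with k hk
      simp only [Set.mem_compl_iff, Set.mem_singleton_iff, hy]
      intro h
      exact hk (by simpa using h)
    -- real-valued sequences
    set s : ℕ → ℝ := fun k =>
      ((f (y k)).toReal - (f x).toReal - inner ℝ g (d k)) * ‖d k‖⁻¹ with hs_def
    set t : ℕ → ℝ := fun k => (inner ℝ (g - xs) (d k) : ℝ) * ‖d k‖⁻¹ with ht_def
    set r : ℕ → ℝ := fun k =>
      ((f (y k)).toReal - (f x).toReal - inner ℝ xs (d k)) * ‖d k‖⁻¹ with hr_def
    have hrst : ∀ k, r k = s k + t k := by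
      intro k
      simp only [hr_def, hs_def, ht_def, inner_sub_left]
      ring
    set L : ℝ := (inner ℝ (g - xs) w : ℝ) * ‖w‖⁻¹ with hL_def
    -- s → 0
    have hs0 : Tendsto s atTop (𝓝 0) := by
      rw [Metric.tendsto_nhds]
      intro ε hε
      have h2 : (0:ℝ) < ε / 2 := by linarith
      have := hytendM.eventually (hlo (ε/2) h2)
      filter_upwards [this, hdne] with k hk hdk
      have hyx : y k - x = d k := by simp [hy]
      rw [hyx] at hk
      have hnd : (0:ℝ) < ‖d k‖ := norm_pos_iff.mpr hdk
      have : |s k| ≤ ε / 2 := by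
        rw [hs_def]
        simp only []
        rw [abs_mul, abs_of_nonneg (inv_nonneg.mpr (norm_nonneg _))]
        calc |(f (y k)).toReal - (f x).toReal - inner ℝ g (d k)| * ‖d k‖⁻¹
            ≤ (ε/2 * ‖d k‖) * ‖d k‖⁻¹ := by
              apply mul_le_mul_of_nonneg_right hk (inv_nonneg.mpr (norm_nonneg _))
          _ = ε/2 := by
              rw [mul_assoc, mul_inv_cancel₀ (ne_of_gt hnd), mul_one]
      rw [Real.dist_eq, sub_zero]
      linarith
    -- t → L
    have ht_eq : ∀ᶠ k in atTop,
        (inner ℝ (g - xs) (c k • d k) : ℝ) * ‖c k • d k‖⁻¹ = t k := by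
      filter_upwards [hdne] with k hdk
      have hck := hc k
      rw [ht_def]
      refine Eq.symm ?_
      simp only [real_inner_smul_right, norm_smul, Real.norm_eq_abs,
        abs_of_pos hck, mul_inv]
      have hnd : ‖d k‖ ≠ 0 := norm_ne_zero_iff.mpr hdk
      field_simp
    have htL : Tendsto t atTop (𝓝 L) := by
      have h1 : Tendsto (fun k => (inner ℝ (g - xs) (c k • d k) : ℝ)) atTop
          (𝓝 (inner ℝ (g - xs) w)) := tendsto_const_nhds.inner hcd
      have h2 : Tendsto (fun k => ‖c k • d k‖⁻¹) atTop (𝓝 ‖w‖⁻¹) :=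
        (hcd.norm).inv₀ (ne_of_gt hnw)
      exact Tendsto.congr' ht_eq (h1.mul h2)
    have hrL : Tendsto r atTop (𝓝 L) := by
      have := hs0.add htL
      rw [zero_add] at this
      exact Tendsto.congr (fun k => (hrst k).symm) this
    -- Φ ∘ y is eventually the coercion of r
    have hΦr : ∀ᶠ k in atTop, Φ (y k) = ((r k : ℝ) : EReal) := by
      filter_upwards [] with k
      have hyx : y k - x = d k := by simp [hy]
      have hfy : f (y k) = (((f (y k)).toReal : ℝ) : EReal) :=
        (EReal.coe_toReal (hM _ (hymem k)) (hbot _)).symm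
      have hfx : f x = (((f x).toReal : ℝ) : EReal) :=
        (EReal.coe_toReal hfxtop hfxbot).symm
      rw [hΦdef]
      simp only [hyx]
      conv_lhs => rw [hfy, hfx]
      rw [hr_def]
      norm_cast
    have hΦtend : Tendsto (fun k => Φ (y k)) atTop (𝓝 ((L : ℝ) : EReal)) :=
      Tendsto.congr' (hΦr.mono fun k hk => hk.symm) (EReal.tendsto_coe.mpr hrL)
    have hlim_eq : Filter.liminf (fun k => Φ (y k)) atTop = ((L : ℝ) : EReal) :=
      hΦtend.liminf_eq
    have hle : Filter.liminf Φ (𝓝[≠] x) ≤ Filter.liminf (fun k => Φ (y k)) atTop := by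
      have hmap : map y atTop ≤ 𝓝[≠] x := hytendne
      have h := Filter.liminf_le_liminf_of_le (u := Φ) hmap
      rwa [← Filter.liminf_comp] at h
    have h0L : (0 : EReal) ≤ ((L : ℝ) : EReal) := by
      rw [← hlim_eq]
      exact le_trans hliminf hle
    have h0L' : (0:ℝ) ≤ L := by exact_mod_cast h0L
    rw [hL_def] at h0L'
    nlinarith [inv_pos.mpr hnw]
  -- From both signs we get orthogonality
  rw [← Submodule.starProjection_apply]
  apply Submodule.eq_starProjection_of_mem_of_inner_eq_zero hgW
  intro w hw
  have h1 := key w hw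
  have h2 := key (-w) (W.neg_mem hw)
  rw [inner_neg_right] at h2
  have : (inner ℝ (g - xs) w : ℝ) = 0 := le_antisymm (by linarith) h1
  rw [real_inner_comm] at this ⊢
  rw [inner_sub_right] at this ⊢
  linarith
end

section
/- Let f : ℝⁿ → ℝ ∪ {+∞}, let M ⊆ dom f and x ∈ M, let W be a linear subspace of ℝⁿ contained in the tangent cone to M at x, and suppose there exists g ∈ W such that f(y) − f(x) − ⟨g, y − x⟩ = o(‖y − x‖) as y → x with y ∈ M. Then ‖g‖ ≤ ‖x*‖ for every Fréchet subgradient x* of f at x. -/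
open Filter Topology

/-- if `M ⊆ dom f`, `x ∈ M`, `W` is a linear subspace contained in the tangent
cone to `M` at `x`, and `g ∈ W` satisfies `f y - f x - ⟨g, y-x⟩ = o(‖y-x‖)` as `y → x` in `M`,
then `‖g‖ ≤ ‖x*‖` for every Fréchet subgradient `x*` of `f` at `x`. -/
theorem statement2 {n : ℕ} (f : EuclideanSpace ℝ (Fin n) → EReal)
    (hbot : ∀ y, f y ≠ ⊥)
    (M : Set (EuclideanSpace ℝ (Fin n))) (hM : ∀ y ∈ M, f y ≠ ⊤)
    (x : EuclideanSpace ℝ (Fin n)) (hx : x ∈ M)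
    (W : Submodule ℝ (EuclideanSpace ℝ (Fin n))) (hW : (W : Set _) ⊆ TangentCone M x)
    (g : EuclideanSpace ℝ (Fin n)) (hgW : g ∈ W)
    (hlo : ∀ ε > (0:ℝ), ∀ᶠ y in 𝓝[M] x,
      |(f y).toReal - (f x).toReal - (inner ℝ g (y - x) : ℝ)| ≤ ε * ‖y - x‖)
    (xs : EuclideanSpace ℝ (Fin n)) (hxs : xs ∈ FrechetSubdiff f x) :
    ‖g‖ ≤ ‖xs‖ := by
  -- Handle the trivial case g = 0
  rcases eq_or_ne g 0 with hg0 | hg0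
  · simp [hg0]
  have hgpos : (0:ℝ) < ‖g‖ := norm_pos_iff.mpr hg0
  obtain ⟨hfx_top, hfx_bot, hliminf⟩ := hxs
  -- tangent cone data for -g (W is a subspace, so -g ∈ W)
  obtain ⟨c, d, hc_pos, hc_top, hd0, hdM, hcd⟩ := hW (W.neg_mem hgW)
  have hng0 : -g ≠ (0 : EuclideanSpace ℝ (Fin n)) := by simpa using hg0
  -- eventually d k ≠ 0 since c k • d k → -g ≠ 0
  have hdne : ∀ᶠ k in atTop, d k ≠ 0 := by
    filter_upwards [hcd.eventually_ne hng0] with k hk hdk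
    exact hk (by simp [hdk])
  -- the key estimate: for every ε > 0, ⟪g - xs, g⟫ ≤ 2 * ε * ‖g‖
  have key : ∀ ε > (0:ℝ), (inner ℝ (g - xs) g : ℝ) ≤ 2 * ε * ‖g‖ := by
    intro ε hε
    -- from the liminf condition: eventually -ε < quotient
    have hlt : ∀ᶠ y in 𝓝[≠] x,
        ((-ε : ℝ) : EReal) <
          (f y - f x - ((inner ℝ xs (y - x) : ℝ) : EReal)) * ((‖y - x‖⁻¹ : ℝ) : EReal) := by
      refine Filter.eventually_lt_of_lt_liminf ?_ (by isBoundedDefault)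
      refine lt_of_lt_of_le ?_ hliminf
      exact_mod_cast (neg_neg_iff_pos.mpr hε : -ε < (0:ℝ))
    have h2 := hlo ε hε
    -- the sequence y k = x + d k tends to x within M and within {x}ᶜ
    have hyx : Tendsto (fun k => x + d k) atTop (𝓝 x) := by
      have := hd0.const_add x
      simpa using this
    have hyM : Tendsto (fun k => x + d k) atTop (𝓝[M] x) :=
      tendsto_nhdsWithin_iff.mpr ⟨hyx, Filter.Eventually.of_forall hdM⟩
    have hyP : Tendsto (fun k => x + d k) atTop (𝓝[≠] x) := by
      refine tendsto_nhdsWithin_iff.mpr ⟨hyx, ?_⟩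
      filter_upwards [hdne] with k hk
      simpa using hk
    -- eventual real inequality ⟪xs - g, d k⟫ ≤ 2ε‖d k‖
    have hstep : ∀ᶠ k in atTop, (inner ℝ (xs - g) (d k) : ℝ) ≤ 2 * ε * ‖d k‖ := by
      filter_upwards [hyP.eventually hlt, hyM.eventually h2, hdne] with k h1 h2' hdk
      have hMem : x + d k ∈ M := hdM k
      have hyr : f (x + d k) = (((f (x + d k)).toReal : ℝ) : EReal) :=
        (EReal.coe_toReal (hM _ hMem) (hbot _)).symm
      have hxr : f x = (((f x).toReal : ℝ) : EReal) :=
        (EReal.coe_toReal hfx_top hfx_bot).symm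
      set A := (f (x + d k)).toReal - (f x).toReal with hA
      have hnd : (0:ℝ) < ‖d k‖ := norm_pos_iff.mpr hdk
      have h1' : -ε < (A - (inner ℝ xs (x + d k - x) : ℝ)) * ‖x + d k - x‖⁻¹ := by
        rw [hyr, hxr, ← EReal.coe_sub, ← EReal.coe_sub, ← EReal.coe_mul] at h1
        exact_mod_cast h1
      have hsimp : x + d k - x = d k := by abel
      rw [hsimp] at h1' h2'
      rw [← div_eq_mul_inv] at h1'
      have h1'' : -ε * ‖d k‖ < A - (inner ℝ xs (d k) : ℝ) := by
        have := (lt_div_iff₀ hnd).mp h1'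
        linarith
      have h2'' := (abs_le.mp h2').2
      -- A ≥ ⟪xs,dk⟫ - ε‖dk‖ and A ≤ ⟪g,dk⟫ + ε‖dk‖
      rw [inner_sub_left]
      linarith
    -- scale by c k and pass to the limit
    have hstep2 : ∀ᶠ k in atTop, (inner ℝ (xs - g) (c k • d k) : ℝ) ≤ 2 * ε * ‖c k • d k‖ := by
      filter_upwards [hstep] with k hk
      rw [real_inner_smul_right, norm_smul, Real.norm_eq_abs, abs_of_pos (hc_pos k)]
      calc c k * (inner ℝ (xs - g) (d k) : ℝ) ≤ c k * (2 * ε * ‖d k‖) :=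
            mul_le_mul_of_nonneg_left hk (hc_pos k).le
        _ = 2 * ε * (c k * ‖d k‖) := by ring
    have hL : Tendsto (fun k => (inner ℝ (xs - g) (c k • d k) : ℝ)) atTop
        (𝓝 (inner ℝ (xs - g) (-g) : ℝ)) :=
      (Continuous.tendsto (continuous_const.inner continuous_id) (-g)).comp hcd
    have hR : Tendsto (fun k => 2 * ε * ‖c k • d k‖) atTop (𝓝 (2 * ε * ‖-g‖)) :=
      hcd.norm.const_mul _
    have hlim := le_of_tendsto_of_tendsto hL hR hstep2
    have heq : (inner ℝ (xs - g) (-g) : ℝ) = (inner ℝ (g - xs) g : ℝ) := by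
      rw [inner_neg_right, inner_sub_left, inner_sub_left]
      ring
    rw [heq, norm_neg] at hlim
    exact hlim
  -- conclude ⟪g - xs, g⟫ ≤ 0
  have hle0 : (inner ℝ (g - xs) g : ℝ) ≤ 0 := by
    by_contra h
    push_neg at h
    set K := (inner ℝ (g - xs) g : ℝ) with hK
    have hkey := key (K / (4 * ‖g‖)) (by positivity)
    have heq : 2 * (K / (4 * ‖g‖)) * ‖g‖ = K / 2 := by
      field_simp
      ring
    rw [heq] at hkey
    linarith
  have h1 : ‖g‖ ^ 2 ≤ (inner ℝ xs g : ℝ) := by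
    rw [inner_sub_left] at hle0
    have := real_inner_self_eq_norm_sq g
    nlinarith
  have h2 : (inner ℝ xs g : ℝ) ≤ ‖xs‖ * ‖g‖ := real_inner_le_norm xs g
  nlinarith [h1, h2, hgpos]
end

section
/- Let f : ℝⁿ → ℝ ∪ {+∞}, let x ∈ dom f, and let x* be a Fréchet subgradient of f at x. Let S be a subset of the graph of f, Graph f = {(y, f(y)) : y ∈ dom f} ⊆ ℝⁿ × ℝ, with u := (x, f(x)) ∈ S. Then for every vector w ∈ ℝⁿ × ℝ such that both w and −w belong to the tangent cone to S at u, one has ⟨(x*, −1), w⟩ = 0; in particular (x*, −1) is orthogonal to every linear subspace of ℝⁿ × ℝ contained in the tangent cone to S at u. -/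
open Filter Topology

lemma tangent_le {n : ℕ} (f : EuclideanSpace ℝ (Fin n) → EReal)
    (x xs : EuclideanSpace ℝ (Fin n)) (hxs : xs ∈ FrechetSubdiff f x)
    (r : ℝ) (hr : f x = (r : EReal))
    (S : Set (EuclideanSpace ℝ (Fin n) × ℝ))
    (hS : S ⊆ {p : EuclideanSpace ℝ (Fin n) × ℝ | f p.1 = (p.2 : EReal)})
    (w : EuclideanSpace ℝ (Fin n) × ℝ) (hw : w ∈ TangentCone S (x, r)) :
    (inner ℝ xs w.1 : ℝ) ≤ w.2 := by
  obtain ⟨c, d, hcpos, hc, hd0, hdS, hcd⟩ := hw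
  have hgraph : ∀ k, f (x + (d k).1) = ((r + (d k).2 : ℝ) : EReal) := fun k => hS (hdS k)
  have hzero : ∀ k, (d k).1 = 0 → (d k).2 = 0 := by
    intro k h
    have := hgraph k
    rw [h, add_zero, hr] at this
    have : r = r + (d k).2 := by exact_mod_cast this
    linarith
  have h1 : Tendsto (fun k => c k • (d k).1) atTop (𝓝 w.1) := by
    simpa [Function.comp_def] using (continuous_fst.tendsto w).comp hcd
  have h2 : Tendsto (fun k => c k * (d k).2) atTop (𝓝 w.2) := by
    simpa [Function.comp_def] using (continuous_snd.tendsto w).comp hcd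
  have hd1 : Tendsto (fun k => (d k).1) atTop (𝓝 0) := by
    simpa [Function.comp_def] using (continuous_fst.tendsto (0 : EuclideanSpace ℝ (Fin n) × ℝ)).comp hd0
  have hx1 : Tendsto (fun k => x + (d k).1) atTop (𝓝 x) := by
    simpa using tendsto_const_nhds.add hd1
  have key : ∀ ε : ℝ, 0 < ε → (inner ℝ xs w.1 : ℝ) - w.2 ≤ ε * ‖w.1‖ := by
    intro ε hε
    obtain ⟨_, _, hlim⟩ := hxs
    have hev : ∀ᶠ y in 𝓝[≠] x,
        (-(ε:ℝ) : EReal) < (f y - f x - ((inner ℝ xs (y - x) : ℝ) : EReal)) * ((‖y - x‖⁻¹ : ℝ) : EReal) := by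
      apply Filter.eventually_lt_of_lt_liminf
      · refine lt_of_lt_of_le ?_ hlim
        exact_mod_cast neg_neg_of_pos hε
      · exact Filter.isBoundedUnder_of ⟨⊥, fun _ => bot_le⟩
    rw [eventually_nhdsWithin_iff] at hev
    have hev2 := hx1.eventually hev
    have hseq : ∀ᶠ k in atTop, (inner ℝ xs (c k • (d k).1) : ℝ) - c k * (d k).2
        ≤ ε * ‖c k • (d k).1‖ := by
      filter_upwards [hev2] with k hk
      rcases eq_or_ne ((d k).1) 0 with h0 | h0
      · have h02 := hzero k h0
        simp [h0, h02]
      · have hne : x + (d k).1 ∈ ({x}ᶜ : Set _) := by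
          simp only [Set.mem_compl_iff, Set.mem_singleton_iff]
          intro h
          exact h0 (by simpa using h)
        have hIE := hk hne
        rw [hgraph k, hr] at hIE
        have hsub : (x + (d k).1) - x = (d k).1 := by abel
        rw [hsub] at hIE
        have hcoe : ((r + (d k).2 : ℝ) : EReal) - (r : EReal) - ((inner ℝ xs ((d k).1) : ℝ) : EReal)
            = (((d k).2 - inner ℝ xs ((d k).1) : ℝ) : EReal) := by
          rw [← EReal.coe_sub, ← EReal.coe_sub]; norm_num
        rw [hcoe, ← EReal.coe_mul] at hIE
        have hre : (-ε : ℝ) < ((d k).2 - inner ℝ xs ((d k).1)) * ‖(d k).1‖⁻¹ := by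
          exact_mod_cast hIE
        have hnpos : (0:ℝ) < ‖(d k).1‖ := norm_pos_iff.mpr h0
        rw [← div_eq_mul_inv, lt_div_iff₀ hnpos] at hre
        have hck := (hcpos k).le
        have hm : c k * (-ε * ‖(d k).1‖) ≤ c k * ((d k).2 - inner ℝ xs ((d k).1)) :=
          mul_le_mul_of_nonneg_left hre.le hck
        have hnorm : ‖c k • (d k).1‖ = c k * ‖(d k).1‖ := by
          rw [norm_smul, Real.norm_eq_abs, abs_of_pos (hcpos k)]
        have hip : (inner ℝ xs (c k • (d k).1) : ℝ) = c k * inner ℝ xs ((d k).1) :=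
          real_inner_smul_right xs _ _
        rw [hnorm, hip]
        nlinarith [hm]
    have hl : Tendsto (fun k => (inner ℝ xs (c k • (d k).1) : ℝ) - c k * (d k).2)
        atTop (𝓝 ((inner ℝ xs w.1 : ℝ) - w.2)) :=
      (tendsto_const_nhds.inner h1).sub h2
    have hrt : Tendsto (fun k => ε * ‖c k • (d k).1‖) atTop (𝓝 (ε * ‖w.1‖)) :=
      tendsto_const_nhds.mul h1.norm
    exact le_of_tendsto_of_tendsto hl hrt hseq
  by_contra hlt
  push_neg at hlt
  set δ := (inner ℝ xs w.1 : ℝ) - w.2 with hδ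
  have hδpos : 0 < δ := by simp only [hδ]; linarith
  have hden : (0:ℝ) < ‖w.1‖ + 1 := by positivity
  have hq := key (δ / (‖w.1‖ + 1)) (by positivity)
  have hmul : δ / (‖w.1‖ + 1) * (‖w.1‖ + 1) = δ := div_mul_cancel₀ _ hden.ne'
  nlinarith [div_pos hδpos hden, norm_nonneg w.1]

/-- let `x*` be a Fréchet subgradient of `f` at `x ∈ dom f` (so `f x = r ∈ ℝ`),
and let `S ⊆ Graph f` contain `u = (x, r)`.  Then for every `w ∈ ℝⁿ × ℝ` with both `w` and
`-w` in the tangent cone to `S` at `u`, one has `⟨(x*, -1), w⟩ = 0`; in particular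
`(x*, -1)` is orthogonal to every linear subspace contained in that tangent cone. -/
theorem statement4 {n : ℕ} (f : EuclideanSpace ℝ (Fin n) → EReal)
    (hbot : ∀ y, f y ≠ ⊥)
    (x xs : EuclideanSpace ℝ (Fin n)) (hxs : xs ∈ FrechetSubdiff f x)
    (r : ℝ) (hr : f x = (r : EReal))
    (S : Set (EuclideanSpace ℝ (Fin n) × ℝ))
    (hS : S ⊆ {p : EuclideanSpace ℝ (Fin n) × ℝ | f p.1 = (p.2 : EReal)})
    (hu : (x, r) ∈ S) :
    (∀ w : EuclideanSpace ℝ (Fin n) × ℝ,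
        w ∈ TangentCone S (x, r) → -w ∈ TangentCone S (x, r) →
        (inner ℝ xs w.1 : ℝ) + (-1) * w.2 = 0) ∧
    (∀ T : Submodule ℝ (EuclideanSpace ℝ (Fin n) × ℝ),
        (T : Set _) ⊆ TangentCone S (x, r) →
        ∀ w ∈ T, (inner ℝ xs w.1 : ℝ) + (-1) * w.2 = 0) := by
  have main : ∀ w : EuclideanSpace ℝ (Fin n) × ℝ,
      w ∈ TangentCone S (x, r) → -w ∈ TangentCone S (x, r) →
      (inner ℝ xs w.1 : ℝ) + (-1) * w.2 = 0 := by
    intro w hw hw'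
    have ha := tangent_le f x xs hxs r hr S hS w hw
    have hb := tangent_le f x xs hxs r hr S hS (-w) hw'
    simp only [Prod.fst_neg, Prod.snd_neg, inner_neg_right] at hb
    linarith
  exact ⟨main, fun T hT w hwT => main w (hT hwT) (hT (T.neg_mem hwT))⟩
end

section
/- Let f : ℝ → ℝ be defined by f(x) = x for x ≤ 0 and f(x) = −√x for x > 0. Then the Clarke subdifferential of f at 0 is ∂°f(0) = (−∞, 1]; in particular 0 ∈ ∂°f(0), i.e., 0 is a Clarke critical point of f. -/
open Filter Topology Pointwise

/-- The Fréchet subdifferential of `f : ℝ → ℝ` at `x`: the set of `x*` with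
`liminf_{y → x, y ≠ x} (f y - f x - x*·(y-x))/|y-x| ≥ 0` (liminf in the extended reals). -/
noncomputable def FrechetSubdiff1 (f : ℝ → ℝ) (x : ℝ) : Set ℝ :=
  {xs | 0 ≤ Filter.liminf
      (fun y => (((f y - f x - xs * (y - x)) / |y - x| : ℝ) : EReal)) (𝓝[≠] x)}

/-- The limiting subdifferential `∂f(x)`: limits `xₖ* → p` with `xₖ* ∈ ∂̂f(xₖ)`,
`xₖ → x` and `f xₖ → f x`. -/
noncomputable def LimitingSubdiff1 (f : ℝ → ℝ) (x : ℝ) : Set ℝ :=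
  {p | ∃ (y ys : ℕ → ℝ), (∀ k, ys k ∈ FrechetSubdiff1 f (y k)) ∧
      Tendsto y atTop (𝓝 x) ∧ Tendsto (fun k => f (y k)) atTop (𝓝 (f x)) ∧
      Tendsto ys atTop (𝓝 p)}

/-- The asymptotic limiting subdifferential `∂^∞f(x)`: limits `tₖ·yₖ* → q` with
`yₖ* ∈ ∂̂f(yₖ)`, `yₖ → x`, `f yₖ → f x` and `tₖ → 0⁺`. -/
noncomputable def AsymptoticSubdiff1 (f : ℝ → ℝ) (x : ℝ) : Set ℝ :=
  {q | ∃ (y ys : ℕ → ℝ) (t : ℕ → ℝ), (∀ k, ys k ∈ FrechetSubdiff1 f (y k)) ∧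
      (∀ k, 0 < t k) ∧ Tendsto y atTop (𝓝 x) ∧
      Tendsto (fun k => f (y k)) atTop (𝓝 (f x)) ∧
      Tendsto t atTop (𝓝 0) ∧ Tendsto (fun k => t k * ys k) atTop (𝓝 q)}

/-- The Clarke subdifferential `∂°f(x) = closure (convexHull (∂f(x) + ∂^∞f(x)))`. -/
noncomputable def ClarkeSubdiff1 (f : ℝ → ℝ) (x : ℝ) : Set ℝ :=
  closure (convexHull ℝ (LimitingSubdiff1 f x + AsymptoticSubdiff1 f x))

/-- If the difference quotient is eventually `≤ c` on the right of `x`, and `xs` is a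
Fréchet subgradient at `x`, then `0 ≤ c`. -/
private theorem key_le (f : ℝ → ℝ) (x xs c : ℝ)
    (hxs : xs ∈ FrechetSubdiff1 f x)
    (hev : ∀ᶠ y in 𝓝[>] x, (f y - f x - xs * (y - x)) / |y - x| ≤ c) :
    (0 : ℝ) ≤ c := by
  simp only [FrechetSubdiff1, Set.mem_setOf_eq] at hxs
  have hmono : 𝓝[>] x ≤ 𝓝[≠] x := nhdsWithin_mono x fun z hz => ne_of_gt hz
  have hfreq : ∃ᶠ y in 𝓝[≠] x,
      (((f y - f x - xs * (y - x)) / |y - x| : ℝ) : EReal) ≤ (c : EReal) := by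
    refine Frequently.filter_mono ?_ hmono
    exact (hev.mono fun y hy => EReal.coe_le_coe_iff.2 hy).frequently
  have h := hxs.trans (Filter.liminf_le_of_frequently_le' hfreq)
  exact_mod_cast h

private theorem frechet_le_one (f : ℝ → ℝ)
    (hf : ∀ x : ℝ, f x = if x ≤ 0 then x else -Real.sqrt x) :
    ∀ x : ℝ, ∀ xs ∈ FrechetSubdiff1 f x, xs ≤ 1 := by
  intro x xs hxs
  rcases lt_trichotomy x 0 with hx | hx | hx
  · -- x < 0 : quotient is eventually 1 - xs
    have h := key_le f x xs (1 - xs) hxs ?_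
    · linarith
    filter_upwards [Ioo_mem_nhdsGT_of_mem (Set.left_mem_Ico.2 hx)] with y hy
    have hfy : f y = y := by rw [hf y, if_pos hy.2.le]
    have hfx : f x = x := by rw [hf x, if_pos hx.le]
    have h1 : (0:ℝ) < y - x := sub_pos.2 hy.1
    rw [hfy, hfx, abs_of_pos h1]
    rw [div_le_iff₀ h1]
    ring_nf
    exact le_rfl
  · -- x = 0 : quotient tends to -∞, get 0 ≤ -1, contradiction
    subst hx
    have h := key_le f 0 xs (-1) hxs ?_
    · linarith
    have hc : (0:ℝ) < max 1 (1 - xs) := lt_of_lt_of_le one_pos (le_max_left _ _)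
    filter_upwards [Ioo_mem_nhdsGT_of_mem
      (Set.left_mem_Ico.2 (by positivity : (0:ℝ) < (max 1 (1 - xs))⁻¹ ^ 2))] with y hy
    have hy0 : 0 < y := hy.1
    have hfy : f y = -Real.sqrt y := by rw [hf y, if_neg (not_le.2 hy0)]
    have hf0 : f 0 = 0 := by rw [hf 0]; simp
    have hsy : 0 < Real.sqrt y := Real.sqrt_pos.2 hy0
    have hyy : Real.sqrt y * Real.sqrt y = y := Real.mul_self_sqrt hy0.le
    have h2 : Real.sqrt y < (max 1 (1 - xs))⁻¹ := by
      have := Real.sqrt_lt_sqrt hy0.le hy.2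
      rwa [Real.sqrt_sq (by positivity)] at this
    have h3 : max 1 (1 - xs) < (Real.sqrt y)⁻¹ := by
      rw [lt_inv_comm₀ hc hsy]
      exact h2
    have h4 : 1 - xs ≤ max 1 (1 - xs) := le_max_right _ _
    rw [hfy, hf0, sub_zero, sub_zero, abs_of_pos hy0, div_le_iff₀ hy0]
    have h5 : (Real.sqrt y)⁻¹ * y = Real.sqrt y := by
      rw [inv_mul_eq_iff_eq_mul₀ hsy.ne', hyy]
    nlinarith [h3, h4, hy0]
  · -- x > 0 : quotient is at most -xs on the right
    have h := key_le f x xs (-xs) hxs ?_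
    · linarith
    filter_upwards [Ioo_mem_nhdsGT_of_mem (Set.left_mem_Ico.2 (lt_add_one x))] with y hy
    have hy0 : 0 < y := hx.trans hy.1
    have hfy : f y = -Real.sqrt y := by rw [hf y, if_neg (not_le.2 hy0)]
    have hfx : f x = -Real.sqrt x := by rw [hf x, if_neg (not_le.2 hx)]
    have h1 : (0:ℝ) < y - x := sub_pos.2 hy.1
    have hmono : Real.sqrt x ≤ Real.sqrt y := Real.sqrt_le_sqrt hy.1.le
    rw [hfy, hfx, abs_of_pos h1, div_le_iff₀ h1]
    nlinarith

private theorem mem_frechet_neg (f : ℝ → ℝ)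
    (hf : ∀ x : ℝ, f x = if x ≤ 0 then x else -Real.sqrt x) {x : ℝ} (hx : x < 0) :
    (1 : ℝ) ∈ FrechetSubdiff1 f x := by
  simp only [FrechetSubdiff1, Set.mem_setOf_eq]
  have hev : ∀ᶠ y in 𝓝[≠] x,
      (((f y - f x - 1 * (y - x)) / |y - x| : ℝ) : EReal)
        = ((0 : ℝ) : EReal) := by
    have hmem : Set.Iio (0:ℝ) ∈ 𝓝[≠] x := nhdsWithin_le_nhds (Iio_mem_nhds hx)
    filter_upwards [hmem] with y hy
    have hfy : f y = y := by rw [hf y, if_pos (le_of_lt hy)]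
    have hfx : f x = x := by rw [hf x, if_pos hx.le]
    rw [hfy, hfx]
    norm_num
  rw [Filter.liminf_congr hev, Filter.liminf_const]
  simp

private theorem mem_frechet_pos (f : ℝ → ℝ)
    (hf : ∀ x : ℝ, f x = if x ≤ 0 then x else -Real.sqrt x) {x : ℝ} (hx : 0 < x) :
    -(1 / (2 * Real.sqrt x)) ∈ FrechetSubdiff1 f x := by
  set d : ℝ := -(1 / (2 * Real.sqrt x)) with hd_def
  have hd : HasDerivAt f d x := by
    have h1 : HasDerivAt (fun y => -Real.sqrt y) d x := (Real.hasDerivAt_sqrt hx.ne').neg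
    apply h1.congr_of_eventuallyEq
    filter_upwards [Ioi_mem_nhds hx] with y hy
    rw [hf y, if_neg (not_le.2 hy)]
  have htd := hasDerivAt_iff_tendsto.1 hd
  have hq : Tendsto (fun y => (f y - f x - d * (y - x)) / |y - x|) (𝓝 x) (𝓝 0) := by
    apply squeeze_zero_norm _ htd
    intro y
    rw [Real.norm_eq_abs, abs_div, abs_abs, div_eq_inv_mul, Real.norm_eq_abs,
      Real.norm_eq_abs, smul_eq_mul]
    ring_nf
    exact le_rfl
  have hqe : Tendsto (fun y => (((f y - f x - d * (y - x)) / |y - x| : ℝ) : EReal))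
      (𝓝[≠] x) (𝓝 ((0 : ℝ) : EReal)) :=
    EReal.tendsto_coe.2 (hq.mono_left nhdsWithin_le_nhds)
  simp only [FrechetSubdiff1, Set.mem_setOf_eq]
  rw [hqe.liminf_eq]
  simp

/-- for `f(x) = x` if `x ≤ 0` and `f(x) = -√x` if `x > 0`, one has
`∂°f(0) = (-∞, 1]`; in particular `0 ∈ ∂°f(0)`, i.e. `0` is a Clarke critical point. -/
theorem statement13 (f : ℝ → ℝ)
    (hf : ∀ x : ℝ, f x = if x ≤ 0 then x else -Real.sqrt x) :
    ClarkeSubdiff1 f 0 = Set.Iic 1 ∧ (0 : ℝ) ∈ ClarkeSubdiff1 f 0 := by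
  have hf0 : f 0 = 0 := by rw [hf 0]; simp
  have hA := frechet_le_one f hf
  -- upper bound
  have hL : LimitingSubdiff1 f 0 ⊆ Set.Iic 1 := by
    rintro p ⟨y, ys, hys, -, -, hp⟩
    exact le_of_tendsto hp (Eventually.of_forall fun k => hA _ _ (hys k))
  have hAs : AsymptoticSubdiff1 f 0 ⊆ Set.Iic 0 := by
    rintro q ⟨y, ys, t, hys, ht, -, -, ht0, hq⟩
    have hb : ∀ k, t k * ys k ≤ t k := fun k => by
      nlinarith [hA _ _ (hys k), ht k]
    exact le_of_tendsto_of_tendsto' hq ht0 hb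
  have hsum : LimitingSubdiff1 f 0 + AsymptoticSubdiff1 f 0 ⊆ Set.Iic 1 := by
    rintro z ⟨a, ha, b, hb, rfl⟩
    have h1 := hL ha
    have h2 := hAs hb
    simp only [Set.mem_Iic] at *
    linarith
  have hsub : ClarkeSubdiff1 f 0 ⊆ Set.Iic 1 := by
    have h1 : convexHull ℝ (LimitingSubdiff1 f 0 + AsymptoticSubdiff1 f 0) ⊆ Set.Iic 1 :=
      convexHull_min hsum (convex_Iic (1:ℝ))
    have := closure_mono h1
    rwa [IsClosed.closure_eq isClosed_Iic] at this
  -- lower bound : 1 ∈ ∂f(0)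
  have hyneg : ∀ k : ℕ, (-(1 / ((k : ℝ) + 1)) : ℝ) < 0 :=
    fun k => neg_lt_zero.2 (by positivity)
  have hytendsto : Tendsto (fun k : ℕ => -(1 / ((k : ℝ) + 1))) atTop (𝓝 (0:ℝ)) := by
    have h0 : Tendsto (fun k : ℕ => (1 / ((k : ℝ) + 1) : ℝ)) atTop (𝓝 0) :=
      tendsto_one_div_add_atTop_nhds_zero_nat
    have := h0.neg
    simpa using this
  have h1L : (1 : ℝ) ∈ LimitingSubdiff1 f 0 := by
    refine ⟨fun k => -(1 / ((k : ℝ) + 1)), fun _ => 1,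
      fun k => mem_frechet_neg f hf (hyneg k), hytendsto, ?_, tendsto_const_nhds⟩
    rw [hf0]
    have heq : ∀ k : ℕ, f (-(1 / ((k : ℝ) + 1))) = -(1 / ((k : ℝ) + 1)) := fun k => by
      rw [hf, if_pos (hyneg k).le]
    exact hytendsto.congr fun k => (heq k).symm
  -- lower bound : (-∞,0] ⊆ ∂^∞f(0)
  have hypos : ∀ k : ℕ, (0:ℝ) < 1 / ((k : ℝ) + 1) := fun k => by positivity
  have hyt : Tendsto (fun k : ℕ => (1 / ((k : ℝ) + 1) : ℝ)) atTop (𝓝 0) :=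
    tendsto_one_div_add_atTop_nhds_zero_nat
  have hst : Tendsto (fun k : ℕ => Real.sqrt (1 / ((k : ℝ) + 1))) atTop (𝓝 0) := by
    have := (Real.continuous_sqrt.tendsto 0).comp hyt
    simpa only [Function.comp_def, Real.sqrt_zero] using this
  have hAs' : Set.Iic (0:ℝ) ⊆ AsymptoticSubdiff1 f 0 := by
    intro q hq
    rcases eq_or_lt_of_le (Set.mem_Iic.1 hq) with hq0 | hq0
    · -- q = 0
      subst hq0
      refine ⟨fun k => -(1 / ((k : ℝ) + 1)), fun _ => 1, fun k => 1 / ((k : ℝ) + 1),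
        fun k => mem_frechet_neg f hf (hyneg k), hypos, hytendsto, ?_, hyt, by simpa using hyt⟩
      rw [hf0]
      have heq : ∀ k : ℕ, f (-(1 / ((k : ℝ) + 1))) = -(1 / ((k : ℝ) + 1)) := fun k => by
        rw [hf, if_pos (hyneg k).le]
      exact hytendsto.congr fun k => (heq k).symm
    · -- q < 0
      have hspos : ∀ k : ℕ, 0 < Real.sqrt (1 / ((k : ℝ) + 1)) :=
        fun k => Real.sqrt_pos.2 (hypos k)
      refine ⟨fun k => 1 / ((k : ℝ) + 1),
        fun k => -(1 / (2 * Real.sqrt (1 / ((k : ℝ) + 1)))),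
        fun k => (-q) * (2 * Real.sqrt (1 / ((k : ℝ) + 1))),
        fun k => mem_frechet_pos f hf (hypos k),
        fun k => mul_pos (by linarith) (by positivity), hyt, ?_, ?_, ?_⟩
      · rw [hf0]
        have heq : ∀ k : ℕ, f (1 / ((k : ℝ) + 1)) = -Real.sqrt (1 / ((k : ℝ) + 1)) :=
          fun k => by rw [hf, if_neg (not_le.2 (hypos k))]
        have : Tendsto (fun k : ℕ => -Real.sqrt (1 / ((k : ℝ) + 1))) atTop (𝓝 0) := by
          simpa using hst.neg
        exact this.congr fun k => (heq k).symm
      · have : Tendsto (fun k : ℕ => (-q) * (2 * Real.sqrt (1 / ((k : ℝ) + 1))))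
            atTop (𝓝 ((-q) * (2 * 0))) := (tendsto_const_nhds.mul (tendsto_const_nhds.mul hst))
        simpa using this
      · have heq : ∀ k : ℕ, (-q) * (2 * Real.sqrt (1 / ((k : ℝ) + 1)))
            * -(1 / (2 * Real.sqrt (1 / ((k : ℝ) + 1)))) = q := fun k => by
          have hs := hspos k
          field_simp
        exact tendsto_const_nhds.congr fun k => (heq k).symm
  have hlow : Set.Iic (1:ℝ) ⊆ ClarkeSubdiff1 f 0 := by
    intro p hp
    have hmem : p ∈ LimitingSubdiff1 f 0 + AsymptoticSubdiff1 f 0 :=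
      ⟨1, h1L, p - 1, hAs' (Set.mem_Iic.2 (by linarith [Set.mem_Iic.1 hp])), by ring⟩
    exact subset_closure (subset_convexHull ℝ _ hmem)
  have heq : ClarkeSubdiff1 f 0 = Set.Iic 1 := Set.Subset.antisymm hsub hlow
  exact ⟨heq, heq ▸ Set.mem_Iic.2 (by norm_num)⟩
end

section
/- Let f : ℝ → ℝ be defined by f(x) = x²·sin(1/x) for x ≠ 0 and f(0) = 0. Then f is differentiable at every point of ℝ, and the set of critical values of f, i.e., the image f({x ∈ ℝ : f'(x) = 0}), is an infinite set. -/
open Filter Topology Real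

lemma aux_infinite (S : Set ℝ) (h : ∀ ε > 0, ∃ v ∈ S, 0 < |v| ∧ |v| < ε) :
    S.Infinite := by
  by_contra hfin
  rw [Set.not_infinite] at hfin
  have hne : (S \ {0}).Nonempty := by
    obtain ⟨v, hv, hv0, _⟩ := h 1 one_pos
    exact ⟨v, hv, by simpa [abs_pos] using hv0⟩
  obtain ⟨v₀, hv₀, hmin⟩ := Set.exists_min_image (S \ {0}) abs (hfin.diff) hne
  have hv₀pos : 0 < |v₀| := abs_pos.2 hv₀.2
  obtain ⟨v, hv, hvpos, hvlt⟩ := h |v₀| hv₀pos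
  have : |v₀| ≤ |v| := hmin v ⟨hv, by simpa [abs_pos] using hvpos⟩
  linarith

/-- for `f(x) = x²·sin(1/x)` (`x ≠ 0`), `f(0) = 0`, the function `f` is
differentiable everywhere and the set of its critical values, `f '' {x | f'(x) = 0}`,
is infinite. -/
theorem statement15 (f : ℝ → ℝ)
    (hf : ∀ x : ℝ, f x = if x = 0 then 0 else x ^ 2 * Real.sin (1 / x)) :
    Differentiable ℝ f ∧ (f '' {x : ℝ | deriv f x = 0}).Infinite := by
  have hfg : f = fun x => x ^ 2 * Real.sin (1 / x) := by
    funext x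
    rw [hf x]
    split_ifs with h
    · simp [h]
    · rfl
  subst hfg
  set g : ℝ → ℝ := fun x => x ^ 2 * Real.sin (1 / x) with hg
  -- differentiable away from 0
  have hd : ∀ x : ℝ, x ≠ 0 → DifferentiableAt ℝ g x := by
    intro x hx
    apply DifferentiableAt.mul (differentiableAt_pow 2)
    have h1 : DifferentiableAt ℝ (fun x : ℝ => 1 / x) x :=
      (differentiableAt_const 1).div differentiableAt_id hx
    exact (Real.differentiable_sin.differentiableAt).comp x h1
  -- differentiable at 0 with derivative 0
  have h0 : HasDerivAt g 0 0 := by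
    rw [hasDerivAt_iff_tendsto_slope]
    refine squeeze_zero_norm (a := fun x : ℝ => |x|) ?_ ?_
    · intro x
      rcases eq_or_ne x 0 with h | h
      · simp [h, slope]
      · have : slope g 0 x = x * Real.sin (1 / x) := by
          rw [slope_def_field, hg]; simp only [sub_zero]; rw [div_eq_iff h]
          ring
        rw [this]
        calc ‖x * Real.sin (1 / x)‖ = |x| * |Real.sin (1 / x)| := abs_mul _ _
          _ ≤ |x| * 1 := by
              gcongr
              exact Real.abs_sin_le_one _
          _ = |x| := mul_one _
    · have : Tendsto (fun x : ℝ => |x|) (𝓝 0) (𝓝 |0|) := continuous_abs.tendsto 0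
      simpa using this.mono_left nhdsWithin_le_nhds
  have hdiff : Differentiable ℝ g := by
    intro x
    rcases eq_or_ne x 0 with h | h
    · exact h ▸ h0.differentiableAt
    · exact hd x h
  refine ⟨hdiff, aux_infinite _ ?_⟩
  intro ε hε
  obtain ⟨k, hk⟩ := exists_nat_gt (max 1 (1 / ε))
  have hk1 : (1 : ℝ) ≤ (k : ℝ) := le_of_lt (lt_of_le_of_lt (le_max_left _ _) hk)
  have hkε : 1 / ε < (k : ℝ) := lt_of_le_of_lt (le_max_right _ _) hk
  have hkpos : (0 : ℝ) < k := by linarith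
  have hπ := Real.pi_pos
  set a : ℝ := 1 / ((2 * k + 1) * π) with ha
  set b : ℝ := 1 / (2 * k * π) with hb
  set x0 : ℝ := 1 / (2 * k * π + π / 2) with hx0
  have hden_a : (0 : ℝ) < (2 * k + 1) * π := by positivity
  have hden_b : (0 : ℝ) < 2 * k * π := by positivity
  have hden_x0 : (0 : ℝ) < 2 * k * π + π / 2 := by positivity
  have hapos : 0 < a := by positivity
  have hbpos : 0 < b := by positivity
  have hx0pos : 0 < x0 := by positivity
  have hax0 : a < x0 := by
    rw [ha, hx0]
    apply one_div_lt_one_div_of_lt hden_x0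
    nlinarith
  have hx0b : x0 < b := by
    rw [hx0, hb]
    apply one_div_lt_one_div_of_lt hden_b
    nlinarith
  have hab : a < b := hax0.trans hx0b
  -- g vanishes at a and b
  have hga : g a = 0 := by
    have : (1 : ℝ) / a = (2 * k + 1) * π := by
      rw [ha, one_div_one_div]
    rw [hg]
    simp only
    rw [this]
    have : ((2 * k + 1 : ℕ) : ℝ) * π = (2 * (k : ℝ) + 1) * π := by push_cast; ring
    rw [← this, Real.sin_nat_mul_pi, mul_zero]
  have hgb : g b = 0 := by
    have : (1 : ℝ) / b = 2 * k * π := by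
      rw [hb, one_div_one_div]
    rw [hg]
    simp only
    rw [this]
    have : ((2 * k : ℕ) : ℝ) * π = 2 * (k : ℝ) * π := by push_cast; ring
    rw [← this, Real.sin_nat_mul_pi, mul_zero]
  -- g x0 = x0 ^ 2 > 0
  have hgx0 : g x0 = x0 ^ 2 := by
    have h1 : (1 : ℝ) / x0 = 2 * k * π + π / 2 := by
      rw [hx0, one_div_one_div]
    rw [hg]
    simp only
    rw [h1]
    have h2 : (2 : ℝ) * k * π + π / 2 = (k : ℝ) * (2 * π) + π / 2 := by ring
    rw [h2, Real.sin_add_pi_div_two, Real.cos_nat_mul_two_pi, mul_one]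
  -- max of g on [a, b]
  obtain ⟨c, hcmem, hcmax⟩ := isCompact_Icc.exists_isMaxOn (Set.nonempty_Icc.2 hab.le)
    hdiff.continuous.continuousOn
  have hx0mem : x0 ∈ Set.Icc a b := ⟨hax0.le, hx0b.le⟩
  have hgc_pos : 0 < g c := by
    have := hcmax hx0mem
    have hx0sq : 0 < x0 ^ 2 := by positivity
    calc (0 : ℝ) < x0 ^ 2 := hx0sq
      _ = g x0 := hgx0.symm
      _ ≤ g c := this
  have hca : c ≠ a := fun h => by rw [h, hga] at hgc_pos; exact lt_irrefl _ hgc_pos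
  have hcb : c ≠ b := fun h => by rw [h, hgb] at hgc_pos; exact lt_irrefl _ hgc_pos
  have hcIoo : c ∈ Set.Ioo a b :=
    ⟨lt_of_le_of_ne hcmem.1 (Ne.symm hca), lt_of_le_of_ne hcmem.2 hcb⟩
  have hloc : IsLocalMax g c := hcmax.isLocalMax (Icc_mem_nhds hcIoo.1 hcIoo.2)
  have hderiv : deriv g c = 0 := hloc.deriv_eq_zero
  refine ⟨g c, ⟨c, hderiv, rfl⟩, ?_, ?_⟩
  · exact abs_pos.2 (ne_of_gt hgc_pos)
  · -- g c ≤ c^2 ≤ b^2 ≤ (1/k)^2 ≤ 1/k < ε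
    have hcpos : 0 < c := hapos.trans hcIoo.1
    have hgc_le : g c ≤ c ^ 2 := by
      rw [hg]
      simp only
      nlinarith [Real.sin_le_one (1 / c), Real.neg_one_le_sin (1 / c), sq_nonneg c]
    have hcb2 : c ^ 2 ≤ b ^ 2 := by nlinarith [hcIoo.2, hcpos, hbpos]
    have hb_le : b ≤ 1 / (k : ℝ) := by
      rw [hb, div_le_div_iff₀ hden_b hkpos]
      nlinarith [Real.pi_gt_three]
    have h1kpos : (0 : ℝ) < 1 / (k : ℝ) := by positivity
    have hb2 : b ^ 2 ≤ (1 / (k : ℝ)) ^ 2 := pow_le_pow_left₀ hbpos.le hb_le 2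
    have h1kle : 1 / (k : ℝ) ≤ 1 := by
      rw [div_le_one hkpos]; exact hk1
    have h1k : (1 / (k : ℝ)) ^ 2 ≤ 1 / (k : ℝ) := by
      calc (1 / (k : ℝ)) ^ 2 = (1 / (k : ℝ)) * (1 / (k : ℝ)) := sq (1 / (k : ℝ))
        _ ≤ 1 * (1 / (k : ℝ)) := mul_le_mul_of_nonneg_right h1kle h1kpos.le
        _ = 1 / (k : ℝ) := one_mul _
    have hkε' : 1 / (k : ℝ) < ε := by
      rw [div_lt_iff₀ hkpos]
      rw [div_lt_iff₀ hε] at hkε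
      linarith
    rw [abs_of_pos hgc_pos]
    linarith
end

section
/- Let f : ℝⁿ → ℝ be continuously differentiable, let ρ > 0, and let ψ be a real function that is differentiable at every point of (0, ρ). Assume the Kurdyka–Łojasiewicz inequality: ψ'(f(y))·‖∇f(y)‖ ≥ 1 for every y ∈ ℝⁿ with 0 < f(y) < ρ. Let T > 0 and let x : [0, T] → ℝⁿ be differentiable with x'(t) = −∇f(x(t)) for all t ∈ [0, T], and suppose 0 < f(x(t)) < ρ for all t ∈ [0, T]. Then the length of the trajectory is bounded: ∫₀ᵀ ‖x'(t)‖ dt ≤ ψ(f(x(0))) − ψ(f(x(T))). -/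
open Filter Topology

/-- let `f : ℝⁿ → ℝ` be `C¹`, `ρ > 0`, and `ψ` differentiable on `(0, ρ)`
with derivative `ψ'` there, satisfying the Kurdyka–Łojasiewicz inequality
`ψ'(f y)·‖∇f(y)‖ ≥ 1` whenever `0 < f y < ρ`.  If `x : [0, T] → ℝⁿ` is a trajectory of the
gradient system `x'(t) = -∇f(x(t))` with `0 < f(x(t)) < ρ` on `[0, T]`, then its length is
bounded: `∫₀ᵀ ‖x'(t)‖ dt ≤ ψ(f(x(0))) - ψ(f(x(T)))`. -/
theorem statement16 {n : ℕ} (f : EuclideanSpace ℝ (Fin n) → ℝ) (hf : ContDiff ℝ 1 f)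
    (ρ : ℝ) (hρ : 0 < ρ) (ψ ψ' : ℝ → ℝ)
    (hψ : ∀ s ∈ Set.Ioo (0 : ℝ) ρ, HasDerivAt ψ (ψ' s) s)
    (hKL : ∀ y : EuclideanSpace ℝ (Fin n), f y ∈ Set.Ioo (0 : ℝ) ρ →
      1 ≤ ψ' (f y) * ‖gradient f y‖)
    (T : ℝ) (hT : 0 < T)
    (x x' : ℝ → EuclideanSpace ℝ (Fin n))
    (hx : ∀ t ∈ Set.Icc (0 : ℝ) T, HasDerivAt x (x' t) t)
    (hgrad : ∀ t ∈ Set.Icc (0 : ℝ) T, x' t = -gradient f (x t))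
    (hrange : ∀ t ∈ Set.Icc (0 : ℝ) T, f (x t) ∈ Set.Ioo (0 : ℝ) ρ) :
    ∫ t in (0 : ℝ)..T, ‖x' t‖ ≤ ψ (f (x 0)) - ψ (f (x T)) := by
  -- the gradient of `f` is continuous
  have hgc : Continuous (gradient f) := by
    have h1 : Continuous (fderiv ℝ f) := hf.continuous_fderiv one_ne_zero
    exact (InnerProductSpace.toDual ℝ _).symm.continuous.comp h1
  -- continuous extension of `x` beyond `[0,T]`
  set y : ℝ → EuclideanSpace ℝ (Fin n) :=
    fun t => x ((Set.projIcc 0 T hT.le t : ℝ)) with hy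
  have hxc : ContinuousOn x (Set.Icc 0 T) :=
    fun t ht => (hx t ht).continuousAt.continuousWithinAt
  have hycont : Continuous y := by
    apply hxc.comp_continuous (continuous_subtype_val.comp (continuous_projIcc))
    exact fun t => (Set.projIcc 0 T hT.le t).2
  have hyeq : ∀ t ∈ Set.Icc (0 : ℝ) T, y t = x t := by
    intro t ht
    simp [hy, Set.projIcc_of_mem hT.le ht]
  -- globally continuous speed function
  set φ : ℝ → ℝ := fun t => ‖gradient f (y t)‖ with hφ
  have hφc : Continuous φ := (hgc.comp hycont).norm
  have hφeq : ∀ t ∈ Set.Icc (0 : ℝ) T, φ t = ‖x' t‖ := by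
    intro t ht
    rw [hφ]
    simp only [hyeq t ht, hgrad t ht, norm_neg]
  -- derivative of `ψ ∘ f ∘ x`
  set g : ℝ → ℝ := fun t => ψ (f (x t)) with hg
  have hgd : ∀ t ∈ Set.Icc (0 : ℝ) T,
      HasDerivAt g (ψ' (f (x t)) * (-(‖gradient f (x t)‖ ^ 2))) t := by
    intro t ht
    have hdf : HasFDerivAt f (fderiv ℝ f (x t)) (x t) :=
      (hf.differentiable one_ne_zero (x t)).hasFDerivAt
    have hfx : HasDerivAt (fun s => f (x s)) (fderiv ℝ f (x t) (x' t)) t :=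
      hdf.comp_hasDerivAt t (hx t ht)
    have hval : fderiv ℝ f (x t) (x' t) = -(‖gradient f (x t)‖ ^ 2) := by
      rw [hgrad t ht]
      have h2 : fderiv ℝ f (x t) =
          InnerProductSpace.toDual ℝ _ (gradient f (x t)) := by
        simp [gradient]
      rw [h2]
      simp only [InnerProductSpace.toDual_apply_apply]
      rw [inner_neg_right, real_inner_self_eq_norm_sq]
    rw [hval] at hfx
    exact (hψ _ (hrange t ht)).comp t hfx
  -- the "energy" function
  set H : ℝ → ℝ := fun s => (∫ u in (0:ℝ)..s, φ u) + g s with hH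
  have hHanti : AntitoneOn H (Set.Icc 0 T) := by
    have hIcont : Continuous fun s => ∫ u in (0:ℝ)..s, φ u :=
      intervalIntegral.continuous_primitive (fun a b => hφc.intervalIntegrable a b) 0
    have hHd : ∀ t ∈ Set.Ioo (0 : ℝ) T,
        HasDerivAt H (φ t + ψ' (f (x t)) * (-(‖gradient f (x t)‖ ^ 2))) t := by
      intro t ht
      have h1 : HasDerivAt (fun s => ∫ u in (0:ℝ)..s, φ u) (φ t) t :=
        intervalIntegral.integral_hasDerivAt_right (hφc.intervalIntegrable 0 t)
          hφc.stronglyMeasurable.stronglyMeasurableAtFilter hφc.continuousAt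
      exact h1.add (hgd t (Set.mem_Icc_of_Ioo ht))
    apply antitoneOn_of_deriv_nonpos (convex_Icc 0 T)
    · exact (hIcont.continuousOn).add
        (fun t ht => (hgd t ht).continuousAt.continuousWithinAt)
    · rw [interior_Icc]
      exact fun t ht => (hHd t ht).differentiableAt.differentiableWithinAt
    · rw [interior_Icc]
      intro t ht
      rw [(hHd t ht).deriv]
      have hmem := Set.mem_Icc_of_Ioo ht
      have hKL' := hKL (x t) (hrange t hmem)
      have hφt : φ t = ‖gradient f (x t)‖ := by
        simp only [hφ]
        rw [hyeq t hmem]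
      rw [hφt]
      have hnn : (0:ℝ) ≤ ‖gradient f (x t)‖ := norm_nonneg _
      nlinarith [mul_le_mul_of_nonneg_right hKL' hnn]
  have key := hHanti (Set.left_mem_Icc.2 hT.le) (Set.right_mem_Icc.2 hT.le) hT.le
  rw [hH] at key
  simp only [intervalIntegral.integral_same] at key
  have hint : ∫ t in (0:ℝ)..T, ‖x' t‖ = ∫ u in (0:ℝ)..T, φ u := by
    apply intervalIntegral.integral_congr
    intro t ht
    rw [Set.uIcc_of_le hT.le] at ht
    exact (hφeq t ht).symm
  rw [hint]
  have : g 0 = ψ (f (x 0)) := rfl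
  linarith [key]
end
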